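/- Let R be a commutative ring with an ℕ-grading R = ⊕_{n≥0} R_n, let M be a ℤ-graded R-module, and let 𝔭 be a homogeneous prime ideal of R that does not contain the irrelevant ideal R₊ = ⊕_{n>0} R_n. For any integer n₀, let M_{≥n₀} be the submodule of M generated by the homogeneous elements of degree ≥ n₀. Then the localization of the quotient module M/M_{≥n₀} at 𝔭 is zero; consequently, the localization M_𝔭 is nonzero if and only if the localization (M_{≥n₀})_𝔭 is nonzero (so M and M_{≥n₀} have the same support in Proj R). -/

import Mathlib

/-- Let `R = ⊕_{n ≥ 0} R_n` be an ℕ-graded commutative ring, `M = ⊕_{d ∈ ℤ} M_d` a ℤ-graded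
`R`-module, and `𝔭` a homogeneous prime ideal of `R` not containing the irrelevant ideal
`R₊ = ⊕_{n > 0} R_n`.  For `n₀ ∈ ℤ` let `M_{≥n₀}` be the submodule generated by the
homogeneous elements of degree `≥ n₀`.  Then `(M / M_{≥n₀})_𝔭 = 0`, and consequently
`M_𝔭 ≠ 0` if and only if `(M_{≥n₀})_𝔭 ≠ 0`. -/
theorem localization_cutoff_of_homogeneous_prime
    (R : Type) [CommRing R] (𝒜 : ℕ → AddSubgroup R) [GradedRing 𝒜]
    (M : Type) [AddCommGroup M] [Module R M]
    (ℳ : ℤ → AddSubgroup M) [DirectSum.Decomposition ℳ]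
    (hcompat : ∀ (i : ℕ) (j : ℤ) (r : R) (m : M), r ∈ 𝒜 i → m ∈ ℳ j → r • m ∈ ℳ (i + j))
    (𝔭 : Ideal R) [h𝔭 : 𝔭.IsPrime] (hhom : Ideal.IsHomogeneous 𝒜 𝔭)
    (hirr : ∃ n : ℕ, 0 < n ∧ ∃ r ∈ 𝒜 n, r ∉ 𝔭)
    (n₀ : ℤ)
    (S : Submodule R M) (hS : S = Submodule.span R {m : M | ∃ d ≥ n₀, m ∈ ℳ d}) :
    Subsingleton (LocalizedModule 𝔭.primeCompl (M ⧸ S)) ∧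
      (Nontrivial (LocalizedModule 𝔭.primeCompl M) ↔
        Nontrivial (LocalizedModule 𝔭.primeCompl S)) := by
  obtain ⟨n, hn, r, hr, hr𝔭⟩ := hirr
  have key : ∀ m : M, ∃ t : R, t ∈ 𝔭.primeCompl ∧ t • m ∈ S := by
    intro m
    induction m using DirectSum.Decomposition.inductionOn ℳ with
    | zero => exact ⟨1, Submonoid.one_mem _, by simp⟩
    | homogeneous m' =>
      rename_i d
      set k := (n₀ - d).toNat with hk
      refine ⟨r ^ k, Submonoid.pow_mem _ hr𝔭 k, ?_⟩
      have hpow : r ^ k ∈ 𝒜 (k * n) := by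
        simpa [smul_eq_mul] using SetLike.pow_mem_graded k hr
      have hmem : r ^ k • (m' : M) ∈ ℳ ((k * n : ℕ) + d) := hcompat _ _ _ _ hpow m'.2
      have h1 : (n₀ - d) ≤ (k : ℤ) := Int.self_le_toNat _
      have h2 : (k : ℤ) ≤ (k : ℤ) * n :=
        le_mul_of_one_le_right (Int.natCast_nonneg k) (by exact_mod_cast hn)
      rw [hS]
      exact Submodule.subset_span ⟨((k * n : ℕ) : ℤ) + d, by push_cast; linarith, hmem⟩
    | add x y hx hy =>
      obtain ⟨t1, ht1, hs1⟩ := hx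
      obtain ⟨t2, ht2, hs2⟩ := hy
      refine ⟨t1 * t2, mul_mem ht1 ht2, ?_⟩
      rw [smul_add]
      exact add_mem (by rw [mul_comm, mul_smul]; exact Submodule.smul_mem _ _ hs1)
        (by rw [mul_smul]; exact Submodule.smul_mem _ _ hs2)
  constructor
  · refine subsingleton_of_forall_eq 0 fun x => ?_
    induction x using LocalizedModule.induction_on with
    | h q s =>
      obtain ⟨m, rfl⟩ := Submodule.Quotient.mk_surjective S q
      obtain ⟨t, ht, hts⟩ := key m
      rw [show (0 : LocalizedModule 𝔭.primeCompl (M ⧸ S)) = LocalizedModule.mk 0 1 from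
        (LocalizedModule.zero_mk 1).symm, LocalizedModule.mk_eq]
      refine ⟨⟨t, ht⟩, ?_⟩
      have : (t : R) • (Submodule.Quotient.mk m : M ⧸ S) = 0 := by
        rw [← Submodule.Quotient.mk_smul, Submodule.Quotient.mk_eq_zero]
        exact hts
      simp [Submonoid.smul_def, this]
  · have nz : ∀ (N : Type) [AddCommGroup N] [Module R N] (x : N) (s : 𝔭.primeCompl),
        LocalizedModule.mk x s ≠ 0 ↔ ∀ u : 𝔭.primeCompl, (u : R) • x ≠ 0 := by
      intro N _ _ x s
      rw [show (0 : LocalizedModule 𝔭.primeCompl N) = LocalizedModule.mk 0 1 from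
        (LocalizedModule.zero_mk 1).symm, Ne, LocalizedModule.mk_eq]
      simp [Submonoid.smul_def]
    constructor
    · intro h
      obtain ⟨x, hx⟩ := exists_ne (0 : LocalizedModule 𝔭.primeCompl M)
      induction x using LocalizedModule.induction_on with
      | h m s =>
        rw [nz] at hx
        obtain ⟨t, ht, hts⟩ := key m
        refine nontrivial_of_ne (LocalizedModule.mk (⟨t • m, hts⟩ : S) 1) 0 ?_
        rw [nz]
        intro u hu
        apply hx (u * ⟨t, ht⟩)
        have : (u : R) • (t • m) = 0 := congrArg Subtype.val hu
        rw [Submonoid.coe_mul, mul_smul]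
        exact this
    · intro h
      obtain ⟨x, hx⟩ := exists_ne (0 : LocalizedModule 𝔭.primeCompl S)
      induction x using LocalizedModule.induction_on with
      | h m s =>
        rw [nz] at hx
        refine nontrivial_of_ne (LocalizedModule.mk (m : M) s) 0 ?_
        rw [nz]
        intro u hu
        exact hx u (Subtype.ext hu)
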